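/- Let λ, σ, τ > 0 be real, p, q complex with Re(p) ≥ 0, Re(q) ≥ 0, η₂, η₃ complex with Re(η₃) > Re(η₂) > 0, and n ∈ ℕ. Then for all complex z, the n-th derivative of z ↦ Φ_{p,q}^{λ;σ,τ}(η₂; η₃; z) satisfies (d^n/dz^n) Φ_{p,q}^{λ;σ,τ}(η₂; η₃; z) = ((η₂)_n / (η₃)_n) · Φ_{p,q}^{λ;σ,τ}(η₂+n; η₃+n; z). -/

import Mathlib

open MeasureTheory Set Complex

/-- The classical Mittag-Leffler function `E_λ(x) = Σ xⁿ / Γ(λn+1)`. -/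
noncomputable def mlE (lam : ℝ) (x : ℂ) : ℂ :=
  ∑' n : ℕ, x ^ n / Complex.Gamma (lam * n + 1)

/-- The extended beta function
`B_{p,q}^{λ;σ,τ}(η₁,η₂) = ∫₀¹ t^{η₁-1}(1-t)^{η₂-1} E_λ(-p/t^σ) E_λ(-q/(1-t)^τ) dt`. -/
noncomputable def extBeta (lam sig tau : ℝ) (p q e1 e2 : ℂ) : ℂ :=
  ∫ t in Ioo (0:ℝ) 1,
    (t : ℂ) ^ (e1 - 1) * (1 - (t : ℂ)) ^ (e2 - 1) *
      mlE lam (-p / (t : ℂ) ^ (sig : ℂ)) * mlE lam (-q / (1 - (t : ℂ)) ^ (tau : ℂ))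

/-- The extended confluent hypergeometric function
`Φ_{p,q}^{λ;σ,τ}(η₂;η₃;z) = Σ (B_{p,q}^{λ;σ,τ}(η₂+n,η₃-η₂)/B(η₂,η₃-η₂)) zⁿ/n!`. -/
noncomputable def extPhi (lam sig tau : ℝ) (p q e2 e3 z : ℂ) : ℂ :=
  ∑' n : ℕ,
    (extBeta lam sig tau p q (e2 + n) (e3 - e2) / Complex.betaIntegral e2 (e3 - e2)) *
    z ^ n / (Nat.factorial n : ℂ)

open scoped Nat

/-- Σ k R^(k-1)/k! is summable. -/
private lemma summable_aux (R : ℝ) :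
    Summable (fun k : ℕ => (k : ℝ) * R ^ (k - 1) / (k ! : ℝ)) := by
  rw [← summable_nat_add_iff 1]
  have h : (fun k : ℕ => ((k + 1 : ℕ) : ℝ) * R ^ (k + 1 - 1) / ((k + 1)! : ℝ))
      = fun k : ℕ => R ^ k / (k ! : ℝ) := by
    funext k
    rw [Nat.add_sub_cancel, Nat.factorial_succ]
    push_cast
    rw [mul_div_mul_left _ _ (by positivity : ((k : ℝ) + 1) ≠ 0)]
  rw [h]
  exact Real.summable_pow_div_factorial R

/-- Termwise differentiation of a power series with bounded coefficients. -/
private lemma tsum_hasDerivAt (c : ℕ → ℂ) (M : ℝ) (hc : ∀ k, ‖c k‖ ≤ M) (z : ℂ) :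
    HasDerivAt (fun w : ℂ => ∑' k : ℕ, c k * w ^ k / (k ! : ℂ))
      (∑' k : ℕ, c (k + 1) * z ^ k / (k ! : ℂ)) z := by
  have hM0 : 0 ≤ M := le_trans (norm_nonneg _) (hc 0)
  set R : ℝ := ‖z‖ + 1 with hR
  have hzR : z ∈ Metric.ball (0 : ℂ) R := by
    simp only [Metric.mem_ball, dist_zero_right, hR]
    linarith
  set u : ℕ → ℝ := fun k => M / (k ! : ℝ) * ((k : ℝ) * R ^ (k - 1)) with hu_def
  have hu : Summable u := by
    have := (summable_aux R).mul_left M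
    refine this.congr fun k => ?_
    simp only [hu_def]
    ring
  set g' : ℕ → ℂ → ℂ := fun k w => c k / (k ! : ℂ) * ((k : ℂ) * w ^ (k - 1)) with hg'_def
  have hder : ∀ (k : ℕ) (y : ℂ), y ∈ Metric.ball (0 : ℂ) R →
      HasDerivAt (fun w : ℂ => c k * w ^ k / (k ! : ℂ)) (g' k y) y := by
    intro k y _
    have h1 : HasDerivAt (fun w : ℂ => c k / (k ! : ℂ) * w ^ k)
        (c k / (k ! : ℂ) * ((k : ℂ) * y ^ (k - 1))) y := (hasDerivAt_pow k y).const_mul _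
    have h2 : (fun w : ℂ => c k * w ^ k / (k ! : ℂ))
        = fun w : ℂ => c k / (k ! : ℂ) * w ^ k := by
      funext w; ring
    rw [h2]
    exact h1
  have hbound : ∀ (k : ℕ) (y : ℂ), y ∈ Metric.ball (0 : ℂ) R → ‖g' k y‖ ≤ u k := by
    intro k y hy
    have hyR : ‖y‖ ≤ R := by
      simp only [Metric.mem_ball, dist_zero_right] at hy
      exact hy.le
    have : ‖g' k y‖ = ‖c k‖ / (k ! : ℝ) * ((k : ℝ) * ‖y‖ ^ (k - 1)) := by
      simp [hg'_def, norm_mul, norm_div, norm_pow]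
    rw [this]
    show _ ≤ M / (k ! : ℝ) * ((k : ℝ) * R ^ (k - 1))
    gcongr
    exact hc k
  have hg0 : Summable fun k : ℕ => c k * z ^ k / (k ! : ℂ) := by
    refine Summable.of_norm_bounded
      ((Real.summable_pow_div_factorial ‖z‖).mul_left M) fun k => ?_
    have : ‖c k * z ^ k / (k ! : ℂ)‖ = ‖c k‖ * ‖z‖ ^ k / (k ! : ℝ) := by
      simp [norm_mul, norm_div, norm_pow]
    rw [this]
    show _ ≤ M * (‖z‖ ^ k / (k ! : ℝ))
    rw [mul_div_assoc]
    gcongr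
    exact hc k
  have H := hasDerivAt_tsum_of_isPreconnected hu Metric.isOpen_ball
    (Convex.isPreconnected (convex_ball (0 : ℂ) R)) hder hbound hzR hg0 hzR
  have hsum : Summable fun k => g' k z :=
    Summable.of_norm_bounded hu fun k => hbound k z hzR
  have hval : ∑' k : ℕ, g' k z = ∑' k : ℕ, c (k + 1) * z ^ k / (k ! : ℂ) := by
    rw [Summable.tsum_eq_zero_add hsum]
    have h0 : g' 0 z = 0 := by simp [hg'_def]
    rw [h0, zero_add]
    refine tsum_congr fun k => ?_
    simp only [hg'_def, Nat.add_sub_cancel]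
    have hk1 : ((k : ℂ) + 1) ≠ 0 := by
      have : ((k + 1 : ℕ) : ℂ) ≠ 0 := Nat.cast_ne_zero.2 k.succ_ne_zero
      push_cast at this; exact this
    have hkf : ((k ! : ℕ) : ℂ) ≠ 0 := Nat.cast_ne_zero.2 k.factorial_ne_zero
    rw [Nat.factorial_succ]
    push_cast
    field_simp
  rw [← hval]
  exact H

/-- Uniform bound on the extended beta coefficients. -/
private lemma extBeta_bound (lam sig tau : ℝ) (p q e2 e3 : ℂ) :
    ∃ M : ℝ, 0 ≤ M ∧ ∀ k : ℕ, ‖extBeta lam sig tau p q (e2 + k) (e3 - e2)‖ ≤ M := by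
  classical
  set F : ℕ → ℝ → ℂ := fun k t =>
    (t : ℂ) ^ (e2 + k - 1) * (1 - (t : ℂ)) ^ (e3 - e2 - 1) *
      mlE lam (-p / (t : ℂ) ^ (sig : ℂ)) * mlE lam (-q / (1 - (t : ℂ)) ^ (tau : ℂ)) with hF
  have hBeta : ∀ k : ℕ, extBeta lam sig tau p q (e2 + k) (e3 - e2)
      = ∫ t in Ioo (0:ℝ) 1, F k t := fun k => rfl
  have key : ∀ k k' : ℕ, k ≤ k' → ∀ t : ℝ, t ∈ Ioo (0:ℝ) 1 →
      F k' t = F k t * (t : ℂ) ^ (k' - k) ∧ ‖F k' t‖ ≤ ‖F k t‖ := by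
    intro k k' hkk' t ht
    have ht0 : (0:ℝ) < t := ht.1
    have ht1 : t < 1 := ht.2
    have htc : (t : ℂ) ≠ 0 := by exact_mod_cast ht0.ne'
    have hpow : (t : ℂ) ^ (e2 + k' - 1) = (t : ℂ) ^ (e2 + k - 1) * (t : ℂ) ^ (k' - k) := by
      rw [← Complex.cpow_natCast, ← Complex.cpow_add _ _ htc]
      congr 1
      push_cast [Nat.cast_sub hkk']
      ring
    have heq : F k' t = F k t * (t : ℂ) ^ (k' - k) := by
      simp only [hF]; rw [hpow]; ring
    refine ⟨heq, ?_⟩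
    rw [heq, norm_mul]
    have h1 : ‖(t : ℂ) ^ (k' - k)‖ ≤ 1 := by
      rw [norm_pow, Complex.norm_real, Real.norm_of_nonneg ht0.le]
      exact pow_le_one₀ ht0.le ht1.le
    calc ‖F k t‖ * ‖(t : ℂ) ^ (k' - k)‖ ≤ ‖F k t‖ * 1 := by gcongr
      _ = ‖F k t‖ := mul_one _
  by_cases h : ∃ k : ℕ, IntegrableOn (F k) (Ioo (0:ℝ) 1)
  · set k0 := Nat.find h with hk0def
    have hk0 : IntegrableOn (F k0) (Ioo (0:ℝ) 1) := Nat.find_spec h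
    refine ⟨∫ t in Ioo (0:ℝ) 1, ‖F k0 t‖, integral_nonneg fun t => norm_nonneg _, fun k => ?_⟩
    rcases le_or_gt k0 k with hle | hlt
    · have hmeas : AEStronglyMeasurable (F k) (volume.restrict (Ioo (0:ℝ) 1)) := by
        have cont : Continuous fun t : ℝ => ((t : ℂ)) ^ (k - k0) :=
          Complex.continuous_ofReal.pow _
        refine (hk0.aestronglyMeasurable.mul cont.aestronglyMeasurable).congr ?_
        filter_upwards [ae_restrict_mem measurableSet_Ioo] with t ht
        exact ((key k0 k hle t ht).1).symm
      have hint : IntegrableOn (F k) (Ioo (0:ℝ) 1) := by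
        refine Integrable.mono' hk0.norm hmeas ?_
        filter_upwards [ae_restrict_mem measurableSet_Ioo] with t ht
        exact (key k0 k hle t ht).2
      calc ‖extBeta lam sig tau p q (e2 + k) (e3 - e2)‖
          = ‖∫ t in Ioo (0:ℝ) 1, F k t‖ := by rw [hBeta]
        _ ≤ ∫ t in Ioo (0:ℝ) 1, ‖F k t‖ := norm_integral_le_integral_norm _
        _ ≤ ∫ t in Ioo (0:ℝ) 1, ‖F k0 t‖ := by
            refine integral_mono_ae hint.norm hk0.norm ?_
            filter_upwards [ae_restrict_mem measurableSet_Ioo] with t ht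
            exact (key k0 k hle t ht).2
    · have hni : ¬ IntegrableOn (F k) (Ioo (0:ℝ) 1) := Nat.find_min h hlt
      rw [hBeta, integral_undef hni, norm_zero]
      exact integral_nonneg fun t => norm_nonneg _
  · refine ⟨0, le_refl 0, fun k => ?_⟩
    have hni : ¬ IntegrableOn (F k) (Ioo (0:ℝ) 1) := fun hint => h ⟨k, hint⟩
    rw [hBeta, integral_undef hni, norm_zero]

private lemma beta_rel (e2 e3 : ℂ) (he2 : 0 < e2.re) (he23 : e2.re < e3.re) :
    Complex.betaIntegral e2 (e3 - e2) ≠ 0 ∧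
    Complex.betaIntegral (e2 + 1) (e3 - e2)
      = e2 / e3 * Complex.betaIntegral e2 (e3 - e2) := by
  have h32 : 0 < (e3 - e2).re := by rw [Complex.sub_re]; linarith
  have he3 : 0 < e3.re := lt_trans he2 he23
  have he2ne : e2 ≠ 0 := fun h => by simp [h] at he2
  have he3ne : e3 ≠ 0 := fun h => by simp [h] at he3
  have hΓ2 : Complex.Gamma e2 ≠ 0 := Complex.Gamma_ne_zero_of_re_pos he2
  have hΓ3 : Complex.Gamma e3 ≠ 0 := Complex.Gamma_ne_zero_of_re_pos he3
  have hΓ32 : Complex.Gamma (e3 - e2) ≠ 0 := Complex.Gamma_ne_zero_of_re_pos h32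
  have h1 := Complex.Gamma_mul_Gamma_eq_betaIntegral he2 h32
  have h2 := Complex.Gamma_mul_Gamma_eq_betaIntegral
    (by rw [Complex.add_re, Complex.one_re]; linarith : 0 < (e2 + 1).re) h32
  rw [show e2 + (e3 - e2) = e3 by ring] at h1
  rw [show e2 + 1 + (e3 - e2) = e3 + 1 by ring, Complex.Gamma_add_one e2 he2ne,
    Complex.Gamma_add_one e3 he3ne] at h2
  constructor
  · intro hB
    rw [hB, mul_zero] at h1
    exact (mul_ne_zero hΓ2 hΓ32) h1
  · have hcancel : Complex.Gamma e3 * (e3 * Complex.betaIntegral (e2 + 1) (e3 - e2))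
        = Complex.Gamma e3 * (e2 * Complex.betaIntegral e2 (e3 - e2)) := by
      linear_combination e2 * h1 - h2
    have h3 := mul_left_cancel₀ hΓ3 hcancel
    rw [div_mul_eq_mul_div, eq_div_iff he3ne]
    linear_combination h3

/-- Key step: derivative of `extPhi` in the last variable. -/
private lemma extPhi_hasDerivAt (lam sig tau : ℝ) (p q e2 e3 : ℂ)
    (he2 : 0 < e2.re) (he23 : e2.re < e3.re) (z : ℂ) :
    HasDerivAt (fun w => extPhi lam sig tau p q e2 e3 w)
      (e2 / e3 * extPhi lam sig tau p q (e2 + 1) (e3 + 1) z) z := by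
  obtain ⟨M, hM0, hM⟩ := extBeta_bound lam sig tau p q e2 e3
  obtain ⟨hBne, hBrel⟩ := beta_rel e2 e3 he2 he23
  have he3 : 0 < e3.re := lt_trans he2 he23
  have he2ne : e2 ≠ 0 := fun h => by simp [h] at he2
  have he3ne : e3 ≠ 0 := fun h => by simp [h] at he3
  have hB0 : 0 < ‖Complex.betaIntegral e2 (e3 - e2)‖ := norm_pos_iff.2 hBne
  set c : ℕ → ℂ := fun k =>
    extBeta lam sig tau p q (e2 + k) (e3 - e2) / Complex.betaIntegral e2 (e3 - e2) with hc_def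
  have hc : ∀ k, ‖c k‖ ≤ M / ‖Complex.betaIntegral e2 (e3 - e2)‖ := by
    intro k
    simp only [hc_def, norm_div]
    gcongr
    exact hM k
  have H := tsum_hasDerivAt c (M / ‖Complex.betaIntegral e2 (e3 - e2)‖) hc z
  have hfun : (fun w => extPhi lam sig tau p q e2 e3 w)
      = fun w : ℂ => ∑' k : ℕ, c k * w ^ k / (k ! : ℂ) := rfl
  have hval : ∑' k : ℕ, c (k + 1) * z ^ k / (k ! : ℂ)
      = e2 / e3 * extPhi lam sig tau p q (e2 + 1) (e3 + 1) z := by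
    rw [extPhi, ← tsum_mul_left]
    refine tsum_congr fun k => ?_
    rw [show e3 + 1 - (e2 + 1) = e3 - e2 by ring,
      show e2 + 1 + (k : ℂ) = e2 + ((k + 1 : ℕ) : ℂ) by push_cast; ring, hBrel]
    simp only [hc_def]
    have hkf : ((k ! : ℕ) : ℂ) ≠ 0 := Nat.cast_ne_zero.2 k.factorial_ne_zero
    field_simp
  rw [hfun, ← hval]
  exact H

theorem extPhi_iterated_deriv (lam sig tau : ℝ) (hlam : 0 < lam) (hsig : 0 < sig)
    (htau : 0 < tau) (p q e2 e3 : ℂ) (hp : 0 ≤ p.re) (hq : 0 ≤ q.re)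
    (he2 : 0 < e2.re) (he23 : e2.re < e3.re) (n : ℕ) :
    ∀ z : ℂ,
      iteratedDeriv n (fun w => extPhi lam sig tau p q e2 e3 w) z
        = (ascPochhammer ℂ n).eval e2 / (ascPochhammer ℂ n).eval e3 *
          extPhi lam sig tau p q (e2 + n) (e3 + n) z := by
  induction n generalizing e2 e3 with
  | zero =>
    intro z
    simp [iteratedDeriv_zero, ascPochhammer_zero]
  | succ n IH =>
    intro z
    have he2' : 0 < (e2 + (n : ℂ)).re := by
      rw [Complex.add_re, Complex.natCast_re]
      positivity
    have he23' : (e2 + (n : ℂ)).re < (e3 + (n : ℂ)).re := by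
      rw [Complex.add_re, Complex.add_re, Complex.natCast_re]
      linarith
    rw [iteratedDeriv_succ]
    have hfun : iteratedDeriv n (fun w => extPhi lam sig tau p q e2 e3 w)
        = fun w => (ascPochhammer ℂ n).eval e2 / (ascPochhammer ℂ n).eval e3 *
            extPhi lam sig tau p q (e2 + n) (e3 + n) w := funext (IH e2 e3 he2 he23)
    rw [hfun]
    have hd := (extPhi_hasDerivAt lam sig tau p q (e2 + n) (e3 + n) he2' he23' z).const_mul
      ((ascPochhammer ℂ n).eval e2 / (ascPochhammer ℂ n).eval e3)
    rw [hd.deriv]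
    rw [show e2 + ((n + 1 : ℕ) : ℂ) = e2 + (n : ℂ) + 1 by push_cast; ring,
      show e3 + ((n + 1 : ℕ) : ℂ) = e3 + (n : ℂ) + 1 by push_cast; ring,
      ascPochhammer_succ_eval, ascPochhammer_succ_eval]
    rw [← mul_assoc, div_mul_div_comm]
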